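/- For each i with 1 ≤ i ≤ 16, let w_i be the special word of length i from the list w_1=1, w_2=02, w_3=121, w_4=2102, w_5=12102, w_6=020121, w_7=2120102, w_8=01020121, w_9=121020121, w_10=2021012102, w_11=10121020121, w_12=101202120121, w_13=0210121020121, w_14=01021201020121, w_15=010201202120121, w_16=0201021201020121. Then w_i·φ(0) is irreducibly square-free, where φ(0)=01202120102120210. -/

import Mathlib

/-- A word has a square if some nonempty `u` with `u ++ u` an infix. -/
def HasSquare (w : List (Fin 3)) : Prop :=
  ∃ u : List (Fin 3), u ≠ [] ∧ (u ++ u) <:+: w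

def SquareFree (w : List (Fin 3)) : Prop := ¬ HasSquare w

/-- `u` occurs as a factor of the infinite word `x`. -/
def InfFactor (u : List (Fin 3)) (x : ℕ → Fin 3) : Prop :=
  ∃ m : ℕ, ∀ i < u.length, u.getD i 0 = x (m + i)

def InfSquareFree (x : ℕ → Fin 3) : Prop :=
  ¬ ∃ u : List (Fin 3), u ≠ [] ∧ InfFactor (u ++ u) x

/-- A square-free word is irreducibly square-free if deleting any interior
letter creates a square. -/
def IrrSF (w : List (Fin 3)) : Prop :=
  SquareFree w ∧
    ∀ (w1 w2 : List (Fin 3)) (a : Fin 3),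
      w = w1 ++ [a] ++ w2 → w1 ≠ [] → w2 ≠ [] → HasSquare (w1 ++ w2)

/-- The uniform morphism φ of length 17. -/
def phi : Fin 3 → List (Fin 3) := ![[0,1,2,0,2,1,2,0,1,0,2,1,2,0,2,1,0], [1,2,0,1,0,2,0,1,2,1,0,2,0,1,0,2,1], [2,0,1,2,1,0,1,2,0,2,1,0,1,2,1,0,2]]

def phiW (w : List (Fin 3)) : List (Fin 3) := w.flatMap phi

/-- The special words `w_1, …, w_16` (`special i` is `w_(i+1)`). -/
def special : Fin 16 → List (Fin 3) :=
  ![[1], [0,2], [1,2,1], [2,1,0,2], [1,2,1,0,2], [0,2,0,1,2,1], [2,1,2,0,1,0,2], [0,1,0,2,0,1,2,1], [1,2,1,0,2,0,1,2,1], [2,0,2,1,0,1,2,1,0,2], [1,0,1,2,1,0,2,0,1,2,1], [1,0,1,2,0,2,1,2,0,1,2,1], [0,2,1,0,1,2,1,0,2,0,1,2,1], [0,1,0,2,1,2,0,1,0,2,0,1,2,1], [0,1,0,2,0,1,2,0,2,1,2,0,1,2,1], [0,2,0,1,0,2,1,2,0,1,0,2,0,1,2,1]]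

lemma hasSquare_iff (w : List (Fin 3)) :
    HasSquare w ↔ ∃ i < w.length, ∃ l < w.length, 0 < l ∧ i + 2*l ≤ w.length ∧
      (w.drop i).take l = (w.drop (i+l)).take l := by
  constructor
  · rintro ⟨u, hu, s, t, hst⟩
    subst hst
    have hl : 0 < u.length := List.length_pos_iff.2 hu
    refine ⟨s.length, by simp; omega, u.length, by simp; omega, hl, by simp; omega, ?_⟩
    rw [List.append_assoc, List.drop_left, ← List.drop_drop, List.append_assoc,
      List.drop_left, List.drop_left, List.take_left, List.take_left]
  · rintro ⟨i, hi, l, hl, hl0, hle, heq⟩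
    refine ⟨(w.drop i).take l, ?_, ?_⟩
    · have : ((w.drop i).take l).length = l := by
        rw [List.length_take, List.length_drop]; omega
      intro h; rw [h] at this; simp at this; omega
    · have h1 : (w.drop i).take l ++ (w.drop i).take l = (w.drop i).take (l + l) := by
        rw [List.take_add, List.drop_drop, ← heq]
      rw [h1]
      exact (List.take_prefix (l+l) (w.drop i)).isInfix.trans (List.drop_suffix i w).isInfix

lemma irrSF_iff (w : List (Fin 3)) :
    IrrSF w ↔ (¬ HasSquare w) ∧ ∀ j < w.length, 0 < j → j + 1 < w.length →
      HasSquare (w.take j ++ w.drop (j+1)) := by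
  constructor
  · rintro ⟨hsf, h⟩
    refine ⟨hsf, ?_⟩
    intro j hjw hj0 hj1
    refine h (w.take j) (w.drop (j+1)) (w.getD j 0) ?_ ?_ ?_
    · conv_lhs => rw [← List.take_append_drop j w]
      rw [List.drop_eq_getElem_cons hjw]
      simp [List.getElem?_eq_getElem hjw]
    · apply List.ne_nil_of_length_pos
      simp [List.length_take]; omega
    · apply List.ne_nil_of_length_pos
      simp [List.length_drop]; omega
  · rintro ⟨hsf, h⟩
    refine ⟨hsf, ?_⟩
    rintro w1 w2 a rfl h1 h2
    have h1' : 0 < w1.length := List.length_pos_iff.2 h1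
    have h2' : 0 < w2.length := List.length_pos_iff.2 h2
    have := h w1.length (by simp only [List.length_append]; omega) h1'
      (by simp only [List.length_append]; simp; omega)
    rw [List.append_assoc, List.take_left, ← List.drop_drop, List.drop_left] at this
    simpa using this

def sqAt (t : List (Fin 3)) : Bool :=
  (List.range (t.length / 2)).any fun l => List.isPrefixOf (t.take (l+1)) (t.drop (l+1))

def hasSqB (w : List (Fin 3)) : Bool := w.tails.any sqAt

def irrB (w : List (Fin 3)) : Bool :=
  !(hasSqB w) && (List.range w.length).all fun j =>
    decide (j = 0) || decide (w.length ≤ j+1) || hasSqB (w.take j ++ w.drop (j+1))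

lemma hasSqB_iff (w : List (Fin 3)) : hasSqB w = true ↔ HasSquare w := by
  unfold hasSqB sqAt
  simp only [List.any_eq_true, List.mem_tails, List.mem_range, List.isPrefixOf_iff_prefix]
  constructor
  · rintro ⟨t, ht, l, hl, hpre⟩
    have hlen : (t.take (l+1)).length = l + 1 := by
      rw [List.length_take]; omega
    refine ⟨t.take (l+1), ?_, ?_⟩
    · apply List.ne_nil_of_length_pos; omega
    · obtain ⟨r, hr⟩ := hpre
      have htt : t.take (l+1) ++ t.take (l+1) ++ r = t := by
        rw [List.append_assoc, hr, List.take_append_drop]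
      refine List.IsInfix.trans ?_ ht.isInfix
      exact ⟨[], r, by simpa using htt⟩
  · rintro ⟨u, hu, hinf⟩
    rw [List.infix_iff_prefix_suffix] at hinf
    obtain ⟨t, hpre, hsuf⟩ := hinf
    have hl : 0 < u.length := List.length_pos_iff.2 hu
    have hlen : u.length + u.length ≤ t.length := by
      have := hpre.length_le; simpa using this
    obtain ⟨r, rfl⟩ := hpre
    refine ⟨u ++ u ++ r, hsuf, u.length - 1, by simp; omega, ?_⟩
    have he : u.length - 1 + 1 = u.length := by omega
    rw [he, List.append_assoc, List.take_left, List.drop_left]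
    exact u.prefix_append r

lemma irrB_iff (w : List (Fin 3)) : irrB w = true ↔ IrrSF w := by
  rw [irrSF_iff]
  unfold irrB
  simp only [Bool.and_eq_true, Bool.not_eq_true', List.all_eq_true, List.mem_range,
    Bool.or_eq_true, decide_eq_true_eq, hasSqB_iff]
  refine and_congr ?_ ?_
  · rw [← hasSqB_iff w]; cases hasSqB w <;> simp
  · constructor
    · intro h j hj h0 h1
      rcases h j hj with (h' | h') | h'
      · omega
      · omega
      · exact h'
    · intro h j hj
      by_cases h0 : j = 0
      · exact Or.inl (Or.inl h0)
      · by_cases h1 : w.length ≤ j + 1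
        · exact Or.inl (Or.inr h1)
        · exact Or.inr (h j hj (by omega) (by omega))

set_option maxRecDepth 100000 in
set_option maxHeartbeats 4000000 in
theorem special_phi0_irreducibly_squareFree (i : Fin 16) :
    (special i).length = (i : ℕ) + 1 ∧ IrrSF (special i ++ phi 0) := by
  fin_cases i <;> exact ⟨by decide, (irrB_iff _).1 (by decide)⟩
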